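/- Let H be a real Hilbert space with Hilbert basis (e_i)_{i∈I}, let T be a bounded linear operator on H, and let N ≥ 1 be an integer. Then ∑_{j=1}^{N} a_j(T)² ≤ ∑_{i∈I} ‖T e_i‖² (an inequality in [0,∞]). -/

import Mathlib

open scoped ENNReal RealInnerProductSpace

/-- The `j`-th approximation number of a bounded linear operator `T` on a real Hilbert
space: `a_j(T) = inf{‖T - F‖ : F bounded linear, dim(range F) < j}`. -/
noncomputable def approxNumber {H : Type*} [NormedAddCommGroup H]
    [InnerProductSpace ℝ H] (T : H →L[ℝ] H) (j : ℕ) : ℝ :=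
  sInf {x : ℝ | ∃ F : H →L[ℝ] H,
    Module.rank ℝ (LinearMap.range (F : H →ₗ[ℝ] H)) < (j : Cardinal) ∧ x = ‖T - F‖}


section Aux
variable {H : Type*} [NormedAddCommGroup H] [InnerProductSpace ℝ H]

lemma approxNumber_nonneg (T : H →L[ℝ] H) (j : ℕ) : 0 ≤ approxNumber T j :=
  Real.sInf_nonneg (fun _ ⟨_, _, hx⟩ => hx ▸ norm_nonneg _)

lemma approxSet_bddBelow (T : H →L[ℝ] H) (j : ℕ) :
    BddBelow {x : ℝ | ∃ F : H →L[ℝ] H,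
      Module.rank ℝ (LinearMap.range (F : H →ₗ[ℝ] H)) < (j : Cardinal) ∧ x = ‖T - F‖} :=
  ⟨0, fun _ ⟨_, _, hx⟩ => hx ▸ norm_nonneg _⟩

lemma approxNumber_le (T : H →L[ℝ] H) {j : ℕ} (F : H →L[ℝ] H)
    (h : Module.rank ℝ (LinearMap.range (F : H →ₗ[ℝ] H)) < (j : Cardinal)) :
    approxNumber T j ≤ ‖T - F‖ :=
  csInf_le (approxSet_bddBelow T j) ⟨F, h, rfl⟩

lemma rank_zero_lt {j : ℕ} (hj : 1 ≤ j) :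
    Module.rank ℝ (LinearMap.range ((0 : H →L[ℝ] H) : H →ₗ[ℝ] H)) < (j : Cardinal) := by
  have : LinearMap.range ((0 : H →L[ℝ] H) : H →ₗ[ℝ] H) = ⊥ := LinearMap.range_eq_bot.mpr rfl
  rw [this, rank_bot]
  exact_mod_cast hj

lemma approxNumber_le_norm (T : H →L[ℝ] H) {j : ℕ} (hj : 1 ≤ j) :
    approxNumber T j ≤ ‖T‖ := by
  simpa using approxNumber_le T 0 (rank_zero_lt hj)

lemma approxNumber_antitone (T : H →L[ℝ] H) {j k : ℕ} (hj : 1 ≤ j) (hjk : j ≤ k) :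
    approxNumber T k ≤ approxNumber T j := by
  apply csInf_le_csInf (approxSet_bddBelow T k)
  · exact ⟨‖T - 0‖, 0, rank_zero_lt hj, rfl⟩
  · rintro x ⟨F, hF, hx⟩
    exact ⟨F, hF.trans_le (by exact_mod_cast hjk), hx⟩

end Aux

section Key
variable {H : Type*} [NormedAddCommGroup H] [InnerProductSpace ℝ H] [CompleteSpace H]

lemma approxNumber_succ_le (T : H →L[ℝ] H) {n : ℕ} (v : Fin n → H)
    {c : ℝ} (hc : 0 ≤ c)
    (h : ∀ x ∈ (Submodule.span ℝ (Set.range v))ᗮ, ‖x‖ = 1 → ‖T x‖ ≤ c) :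
    approxNumber T (n + 1) ≤ c := by
  set K := Submodule.span ℝ (Set.range v) with hK
  haveI : FiniteDimensional ℝ K := FiniteDimensional.span_of_finite ℝ (Set.finite_range v)
  set P : H →L[ℝ] H := K.subtypeL ∘L K.orthogonalProjectionOnto with hP
  have hrank : Module.rank ℝ (LinearMap.range ((T ∘L P : H →L[ℝ] H) : H →ₗ[ℝ] H)) < ((n + 1 : ℕ) : Cardinal) := by
    have h1 : LinearMap.range ((T ∘L P : H →L[ℝ] H) : H →ₗ[ℝ] H) ≤ K.map (T : H →ₗ[ℝ] H) := by
      rintro x ⟨y, rfl⟩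
      exact ⟨P y, (K.orthogonalProjectionOnto y).2, rfl⟩
    calc Module.rank ℝ (LinearMap.range ((T ∘L P : H →L[ℝ] H) : H →ₗ[ℝ] H))
        ≤ Module.rank ℝ (K.map (T : H →ₗ[ℝ] H)) := Submodule.rank_mono h1
      _ ≤ Module.rank ℝ K := rank_map_le _ _
      _ ≤ Cardinal.mk (Set.range v) := rank_span_le _
      _ ≤ (n : Cardinal) := by
          have h := Cardinal.mk_range_le_lift (f := v)
          rw [Cardinal.mk_fin] at h
          simpa using h
      _ < ((n + 1 : ℕ) : Cardinal) := by exact_mod_cast Nat.lt_succ_self n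
  refine (approxNumber_le T (T ∘L P) hrank).trans ?_
  refine ContinuousLinearMap.opNorm_le_bound _ hc fun x => ?_
  have hx : (T - T ∘L P) x = T (x - P x) := by
    simp [map_sub]
  set y := x - P x with hy
  have hyK : y ∈ Kᗮ := Submodule.sub_starProjection_mem_orthogonal (K := K) x
  have hy_norm : ‖y‖ ≤ ‖x‖ := by
    have hpyth := Submodule.norm_sq_eq_add_norm_sq_projection x K
    have h2 : ‖Kᗮ.orthogonalProjectionOnto x‖ = ‖y‖ := by
      rw [show ‖Kᗮ.orthogonalProjectionOnto x‖ = ‖Kᗮ.starProjection x‖ from rfl,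
        Submodule.starProjection_orthogonal_val, hy, hP]
      rfl
    nlinarith [norm_nonneg x, norm_nonneg y, norm_nonneg (K.orthogonalProjectionOnto x)]
  rcases eq_or_ne y 0 with h0 | h0
  · rw [hx, h0]
    simpa using mul_nonneg hc (norm_nonneg x)
  · have hTy : ‖T y‖ ≤ c * ‖y‖ := by
      have hu : (‖y‖⁻¹ • y) ∈ Kᗮ := Kᗮ.smul_mem _ hyK
      have hun : ‖(‖y‖⁻¹ • y)‖ = 1 := by
        rw [norm_smul, norm_inv, norm_norm, inv_mul_cancel₀ (norm_ne_zero_iff.mpr h0)]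
      have := h _ hu hun
      rw [map_smul, norm_smul, norm_inv, norm_norm] at this
      have h2 : ‖y‖ * (‖y‖⁻¹ * ‖T y‖) ≤ ‖y‖ * c :=
        mul_le_mul_of_nonneg_left this (norm_nonneg y)
      rwa [← mul_assoc, mul_inv_cancel₀ (norm_ne_zero_iff.mpr h0), one_mul, mul_comm] at h2
    rw [hx]
    exact hTy.trans (mul_le_mul_of_nonneg_left hy_norm hc)

end Key

section Construct
variable {H : Type*} [NormedAddCommGroup H] [InnerProductSpace ℝ H] [CompleteSpace H]

lemma orthonormal_snoc {n : ℕ} {v : Fin n → H} (hv : Orthonormal ℝ v) {x : H}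
    (hx : ‖x‖ = 1) (hmem : x ∈ (Submodule.span ℝ (Set.range v))ᗮ) :
    Orthonormal ℝ (Fin.snoc v x) := by
  have hvx : ∀ i : Fin n, ⟪v i, x⟫ = 0 := fun i =>
    hmem (v i) (Submodule.subset_span (Set.mem_range_self i))
  constructor
  · intro i
    refine Fin.lastCases ?_ (fun j => ?_) i
    · simpa [Fin.snoc_last] using hx
    · simpa [Fin.snoc_castSucc] using hv.1 j
  · intro i j hij
    rcases Fin.eq_castSucc_or_eq_last i with ⟨i', rfl⟩ | rfl <;>
      rcases Fin.eq_castSucc_or_eq_last j with ⟨j', rfl⟩ | rfl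
    · simp only [Fin.snoc_castSucc]
      exact hv.2 (fun h => hij (congrArg Fin.castSucc h))
    · simp only [Fin.snoc_last, Fin.snoc_castSucc]
      exact hvx i'
    · simp only [Fin.snoc_last, Fin.snoc_castSucc]
      rw [real_inner_comm]
      exact hvx j'
    · exact absurd rfl hij

lemma exists_orthonormal_family (T : H →L[ℝ] H) {ε : ℝ} (hε : 0 < ε) (n : ℕ) :
    ∃ m, m ≤ n ∧ ∃ v : Fin m → H, Orthonormal ℝ v ∧
      (∀ j : Fin m, approxNumber T (j + 1) ≤ ‖T (v j)‖ + ε) ∧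
      (m < n → approxNumber T (m + 1) ≤ ε) := by
  induction n with
  | zero =>
    exact ⟨0, le_rfl, fun i => i.elim0, ⟨fun i => i.elim0, fun i => i.elim0⟩,
      fun j => j.elim0, fun h => absurd h (lt_irrefl 0)⟩
  | succ n ih =>
    obtain ⟨m, hm, v, hv, hb, htail⟩ := ih
    rcases lt_or_eq_of_le hm with hlt | rfl
    · exact ⟨m, hm.trans (Nat.le_succ n), v, hv, hb, fun _ => htail hlt⟩
    · by_cases ha : approxNumber T (m + 1) ≤ ε
      · exact ⟨m, Nat.le_succ m, v, hv, hb, fun _ => ha⟩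
      · push_neg at ha
        have hex : ∃ x ∈ (Submodule.span ℝ (Set.range v))ᗮ, ‖x‖ = 1 ∧
            approxNumber T (m + 1) - ε ≤ ‖T x‖ := by
          by_contra hno
          push_neg at hno
          have hc : (0 : ℝ) ≤ approxNumber T (m + 1) - ε := by linarith
          have := approxNumber_succ_le T v hc (fun x hxm hx1 => by
            rcases lt_or_ge ‖T x‖ (approxNumber T (m + 1) - ε) with h' | h'
            · exact h'.le
            · exact absurd h' (not_le.mpr (by
                have := hno x hxm hx1
                linarith [this])))
          linarith
        obtain ⟨x, hxm, hx1, hxT⟩ := hex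
        refine ⟨m + 1, le_rfl, Fin.snoc v x, orthonormal_snoc hv hx1 hxm, fun j => ?_,
          fun h => absurd h (lt_irrefl _)⟩
        refine Fin.lastCases ?_ (fun j' => ?_) j
        · simp only [Fin.snoc_last, Fin.val_last]
          linarith
        · simpa [Fin.snoc_castSucc] using hb j'

end Construct

section HS
variable {I H : Type*} [NormedAddCommGroup H] [InnerProductSpace ℝ H] [CompleteSpace H]

lemma parseval_ofReal (b : HilbertBasis I ℝ H) (y : H) :
    ENNReal.ofReal (‖y‖ ^ 2) = ∑' i, ENNReal.ofReal (⟪y, b i⟫ ^ 2) := by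
  have hs := b.hasSum_inner_mul_inner y y
  have heq : ∀ i, ⟪y, b i⟫ * ⟪b i, y⟫ = ⟪y, b i⟫ ^ 2 := fun i => by
    rw [real_inner_comm (b i) y, sq]
  have hs2 : HasSum (fun i => ⟪y, b i⟫ ^ 2) (‖y‖ ^ 2) := by
    simpa [heq, real_inner_self_eq_norm_sq] using hs
  rw [← hs2.tsum_eq]
  exact ENNReal.ofReal_tsum_of_nonneg (fun i => sq_nonneg _) hs2.summable

lemma hs_adjoint_eq (b : HilbertBasis I ℝ H) (T : H →L[ℝ] H) :
    ∑' i, ENNReal.ofReal (‖(ContinuousLinearMap.adjoint T) (b i)‖ ^ 2) =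
      ∑' i, ENNReal.ofReal (‖T (b i)‖ ^ 2) := by
  calc ∑' i, ENNReal.ofReal (‖(ContinuousLinearMap.adjoint T) (b i)‖ ^ 2)
      = ∑' i, ∑' k, ENNReal.ofReal (⟪(ContinuousLinearMap.adjoint T) (b i), b k⟫ ^ 2) := by
        simp_rw [parseval_ofReal b]
    _ = ∑' k, ∑' i, ENNReal.ofReal (⟪T (b k), b i⟫ ^ 2) := by
        rw [ENNReal.tsum_comm]
        congr 1 with k
        congr 1 with i
        rw [ContinuousLinearMap.adjoint_inner_left, real_inner_comm]
    _ = ∑' k, ENNReal.ofReal (‖T (b k)‖ ^ 2) := by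
        simp_rw [← parseval_ofReal b]

lemma hs_bound (b : HilbertBasis I ℝ H) (T : H →L[ℝ] H) {m : ℕ}
    (v : Fin m → H) (hv : Orthonormal ℝ v) :
    ∑ j : Fin m, ENNReal.ofReal (‖T (v j)‖ ^ 2) ≤ ∑' i, ENNReal.ofReal (‖T (b i)‖ ^ 2) := by
  rw [← hs_adjoint_eq b T]
  calc ∑ j : Fin m, ENNReal.ofReal (‖T (v j)‖ ^ 2)
      = ∑ j : Fin m, ∑' i, ENNReal.ofReal (⟪T (v j), b i⟫ ^ 2) := by
        simp_rw [parseval_ofReal b]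
    _ = ∑' i, ∑ j : Fin m, ENNReal.ofReal (⟪T (v j), b i⟫ ^ 2) :=
        (Summable.tsum_finsetSum (fun j _ => ENNReal.summable)).symm
    _ ≤ ∑' i, ENNReal.ofReal (‖(ContinuousLinearMap.adjoint T) (b i)‖ ^ 2) := by
        refine ENNReal.tsum_le_tsum fun i => ?_
        have hb : ∑ j : Fin m, ⟪v j, (ContinuousLinearMap.adjoint T) (b i)⟫ ^ 2 ≤
            ‖(ContinuousLinearMap.adjoint T) (b i)‖ ^ 2 := by
          have := hv.sum_inner_products_le (s := Finset.univ)
            ((ContinuousLinearMap.adjoint T) (b i))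
          simpa [Real.norm_eq_abs, sq_abs] using this
        calc ∑ j : Fin m, ENNReal.ofReal (⟪T (v j), b i⟫ ^ 2)
            = ENNReal.ofReal (∑ j : Fin m, ⟪v j, (ContinuousLinearMap.adjoint T) (b i)⟫ ^ 2) := by
              rw [ENNReal.ofReal_sum_of_nonneg (fun j _ => sq_nonneg _)]
              congr 1 with j
              rw [ContinuousLinearMap.adjoint_inner_right]
          _ ≤ ENNReal.ofReal (‖(ContinuousLinearMap.adjoint T) (b i)‖ ^ 2) :=
              ENNReal.ofReal_le_ofReal hb

end HS


/-- If `(e_i)_{i∈I}` is a Hilbert basis of the real Hilbert space `H`, `T` is a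
bounded operator on `H`, and `N ≥ 1`, then `∑_{j=1}^N a_j(T)² ≤ ∑_{i∈I} ‖T e_i‖²`
(an inequality in `[0,∞]`). -/
theorem statement11 {I : Type*} {H : Type*} [NormedAddCommGroup H]
    [InnerProductSpace ℝ H] [CompleteSpace H] (b : HilbertBasis I ℝ H)
    (T : H →L[ℝ] H) (N : ℕ) (hN : 1 ≤ N) :
    ∑ j ∈ Finset.Icc 1 N, ENNReal.ofReal (approxNumber T j ^ 2) ≤
      ∑' i, (‖T (b i)‖₊ : ℝ≥0∞) ^ 2 := by
  have hRHS : ∑' i, (‖T (b i)‖₊ : ℝ≥0∞) ^ 2 = ∑' i, ENNReal.ofReal (‖T (b i)‖ ^ 2) := by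
    congr 1 with i
    rw [ENNReal.ofReal_pow (norm_nonneg _), ofReal_norm, enorm_eq_nnnorm]
  rw [hRHS]
  refine ENNReal.le_of_forall_pos_le_add fun ε' hε' _ => ?_
  have hC : (0 : ℝ) ≤ ‖T‖ := norm_nonneg T
  set C : ℝ := ‖T‖ with hCdef
  have hNpos : (0 : ℝ) < N := by exact_mod_cast hN
  have hD : (0 : ℝ) < (N : ℝ) * (2 * C + 1) := by positivity
  set ε : ℝ := min 1 ((ε' : ℝ) / ((N : ℝ) * (2 * C + 1))) with hεdef
  have hε'pos : (0 : ℝ) < ε' := hε'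
  have hεpos : 0 < ε := lt_min one_pos (div_pos hε'pos hD)
  have hε1 : ε ≤ 1 := min_le_left _ _
  have hε2 : (N : ℝ) * (2 * C + 1) * ε ≤ ε' := by
    rw [mul_comm]
    exact (le_div_iff₀ hD).mp (min_le_right _ _)
  have hδ : (N : ℝ) * (ε * (2 * C + ε)) ≤ (ε' : ℝ) := by nlinarith
  obtain ⟨m, hm, v, hv, hb, htail⟩ := exists_orthonormal_family T hεpos N
  set δ : ℝ≥0∞ := ENNReal.ofReal (ε * (2 * C + ε)) with hδdef
  set w : ℕ → ℝ≥0∞ := fun j =>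
    if h : j - 1 < m then ENNReal.ofReal (‖T (v ⟨j - 1, h⟩)‖ ^ 2) else 0 with hw
  have key : ∀ j ∈ Finset.Icc 1 N,
      ENNReal.ofReal (approxNumber T j ^ 2) ≤ w j + δ := by
    intro j hj
    rw [Finset.mem_Icc] at hj
    obtain ⟨hj1, hjN⟩ := hj
    have ha0 : 0 ≤ approxNumber T j := approxNumber_nonneg T j
    by_cases h : j - 1 < m
    · have hb' := hb ⟨j - 1, h⟩
      have hidx : (j - 1 : ℕ) + 1 = j := Nat.succ_pred_eq_of_pos hj1
      rw [hidx] at hb'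
      have hTv : ‖T (v ⟨j - 1, h⟩)‖ ≤ C := by
        have := T.le_opNorm (v ⟨j - 1, h⟩)
        rwa [hv.1 ⟨j - 1, h⟩, mul_one] at this
      have hsq : approxNumber T j ^ 2 ≤ ‖T (v ⟨j - 1, h⟩)‖ ^ 2 + ε * (2 * C + ε) := by
        nlinarith [norm_nonneg (T (v ⟨j - 1, h⟩))]
      calc ENNReal.ofReal (approxNumber T j ^ 2)
          ≤ ENNReal.ofReal (‖T (v ⟨j - 1, h⟩)‖ ^ 2 + ε * (2 * C + ε)) :=
            ENNReal.ofReal_le_ofReal hsq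
        _ ≤ ENNReal.ofReal (‖T (v ⟨j - 1, h⟩)‖ ^ 2) + δ := ENNReal.ofReal_add_le
        _ = w j + δ := by rw [hw]; simp only [dif_pos h]
    · push_neg at h
      have hmj : m + 1 ≤ j := by omega
      have hmN : m < N := by omega
      have haj : approxNumber T j ≤ ε :=
        (approxNumber_antitone T (Nat.succ_le_succ (Nat.zero_le m)) hmj).trans (htail hmN)
      have hsq : approxNumber T j ^ 2 ≤ ε * (2 * C + ε) := by nlinarith
      have hw0 : w j = 0 := by rw [hw]; simp only [dif_neg (not_lt.mpr h)]
      rw [hw0, zero_add]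
      exact ENNReal.ofReal_le_ofReal hsq
  calc ∑ j ∈ Finset.Icc 1 N, ENNReal.ofReal (approxNumber T j ^ 2)
      ≤ ∑ j ∈ Finset.Icc 1 N, (w j + δ) := Finset.sum_le_sum key
    _ = (∑ j ∈ Finset.Icc 1 N, w j) + (N : ℝ≥0∞) * δ := by
        rw [Finset.sum_add_distrib, Finset.sum_const, Nat.card_Icc]
        simp [nsmul_eq_mul]
    _ ≤ (∑ j : Fin m, ENNReal.ofReal (‖T (v j)‖ ^ 2)) + (N : ℝ≥0∞) * δ := by
        gcongr
        have h1 : ∑ j ∈ Finset.Icc 1 N, w j = ∑ k ∈ Finset.range N, w (1 + k) := by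
          rw [← Finset.Ico_add_one_right_eq_Icc, Finset.sum_Ico_eq_sum_range]
          simp
        have h2 : ∑ k ∈ Finset.range N, w (1 + k) = ∑ k ∈ Finset.range m, w (1 + k) := by
          symm
          refine Finset.sum_subset (Finset.range_subset_range.mpr hm) fun k _ hk => ?_
          rw [Finset.mem_range, not_lt] at hk
          rw [hw]
          exact dif_neg (by omega)
        have h3 : ∑ k ∈ Finset.range m, w (1 + k) =
            ∑ j : Fin m, ENNReal.ofReal (‖T (v j)‖ ^ 2) := by
          rw [← Fin.sum_univ_eq_sum_range (fun k => w (1 + k)) m]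
          refine Finset.sum_congr rfl fun j _ => ?_
          rw [hw]
          simp only [Nat.add_sub_cancel_left]
          rw [dif_pos j.isLt]
        rw [h1, h2, h3]
    _ ≤ (∑' i, ENNReal.ofReal (‖T (b i)‖ ^ 2)) + ↑ε' := by
        gcongr
        · exact hs_bound b T v hv
        · have h4 : (N : ℝ≥0∞) * δ = ENNReal.ofReal ((N : ℝ) * (ε * (2 * C + ε))) := by
            rw [hδdef, ← ENNReal.ofReal_natCast N, ← ENNReal.ofReal_mul (Nat.cast_nonneg N)]
          rw [h4, ← ENNReal.ofReal_coe_nnreal]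
          exact ENNReal.ofReal_le_ofReal hδ
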